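/- The only triangular number (of a positive integer) that is a fourth power is 1: if x is a positive integer and x(x+1)/2 = y⁴ for some positive integer y, then x = 1. -/
import Mathlib

lemma coprod_pow {n a b c : ℕ} (hab : Nat.Coprime a b) (h : a * b = c ^ n) :
    ∃ d, a = d ^ n :=
  exists_eq_pow_of_mul_eq_pow (Nat.isUnit_iff.mpr hab) h

lemma odd_sq {w : ℕ} (hw : Odd w) : ∃ k, w ^ 2 = 8 * k + 1 := by
  obtain ⟨u, rfl⟩ := hw
  obtain ⟨v, hv⟩ := Nat.even_mul_succ_self u
  exact ⟨v, by nlinarith⟩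

theorem flt4sub : ∀ x y z : ℕ, y ≠ 0 → z ≠ 0 → x ^ 4 ≠ y ^ 4 + z ^ 2 := by
  intro x
  induction x using Nat.strong_induction_on with
  | _ x IH =>
  intro y z hy hz h
  have hy1 : 1 ≤ y ^ 4 := Nat.one_le_iff_ne_zero.mpr (pow_ne_zero _ hy)
  have hz1 : 1 ≤ z ^ 2 := Nat.one_le_iff_ne_zero.mpr (pow_ne_zero _ hz)
  have hx0 : x ≠ 0 := by rintro rfl; simp at h; omega
  have hyx : y < x := by
    by_contra hc
    push_neg at hc
    have : x ^ 4 ≤ y ^ 4 := Nat.pow_le_pow_left hc 4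
    omega
  by_cases hg : Nat.Coprime x y
  case neg =>
    obtain ⟨g, x₁, y₁, hg2, hx1, hy1⟩ :
        ∃ g x₁ y₁, 2 ≤ g ∧ x = g * x₁ ∧ y = g * y₁ := by
      obtain ⟨x₁, hx1⟩ := Nat.gcd_dvd_left x y
      obtain ⟨y₁, hy1⟩ := Nat.gcd_dvd_right x y
      have hg0 : Nat.gcd x y ≠ 0 := fun hc => hx0 (by rw [hx1, hc]; ring)
      have hg1 : Nat.gcd x y ≠ 1 := hg
      exact ⟨Nat.gcd x y, x₁, y₁, by omega, hx1, hy1⟩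
    rw [hx1, hy1] at h
    have hdvd : (g ^ 2) ^ 2 ∣ z ^ 2 := by
      refine ⟨x₁ ^ 4 - y₁ ^ 4, ?_⟩
      have h4 : (g * x₁) ^ 4 = g ^ 4 * x₁ ^ 4 := by ring
      have h5 : (g * y₁) ^ 4 = g ^ 4 * y₁ ^ 4 := by ring
      rw [h4, h5] at h
      have h6 : ((g : ℕ) ^ 2) ^ 2 = g ^ 4 := by ring
      rw [h6, Nat.mul_sub]
      omega
    have hgz : g ^ 2 ∣ z := (Nat.pow_dvd_pow_iff two_ne_zero).mp hdvd
    obtain ⟨z₁, hz1⟩ := hgz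
    rw [hz1] at h
    have h' : x₁ ^ 4 = y₁ ^ 4 + z₁ ^ 2 := by
      have hcancel : g ^ 4 * x₁ ^ 4 = g ^ 4 * (y₁ ^ 4 + z₁ ^ 2) := by
        have e1 : (g * x₁) ^ 4 = g ^ 4 * x₁ ^ 4 := by ring
        have e2 : (g * y₁) ^ 4 = g ^ 4 * y₁ ^ 4 := by ring
        have e3 : (g ^ 2 * z₁) ^ 2 = g ^ 4 * z₁ ^ 2 := by ring
        rw [e1, e2, e3] at h
        rw [h]; ring
      exact Nat.eq_of_mul_eq_mul_left (by positivity) hcancel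
    have hx₁0 : x₁ ≠ 0 := fun hc => hx0 (by rw [hx1, hc]; ring)
    have hx₁lt : x₁ < x := by
      rw [hx1]
      have h1 : 1 * x₁ < g * x₁ :=
        (Nat.mul_lt_mul_right (Nat.pos_of_ne_zero hx₁0)).mpr (by omega)
      omega
    have hy₁0 : y₁ ≠ 0 := fun hc => hy (by rw [hy1, hc]; ring)
    have hz₁0 : z₁ ≠ 0 := fun hc => hz (by rw [hz1, hc]; ring)
    exact IH x₁ hx₁lt y₁ z₁ hy₁0 hz₁0 h'
  case pos =>
  have hxodd : Odd x := by
    rcases Nat.even_or_odd x with hxe | hxo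
    · exfalso
      have hyo : Odd y := by
        rcases Nat.even_or_odd y with hye | hyo
        · exfalso
          obtain ⟨t, rfl⟩ := hxe
          obtain ⟨s, rfl⟩ := hye
          have h2 : (2 : ℕ) ∣ Nat.gcd (t + t) (s + s) :=
            Nat.dvd_gcd ⟨t, by ring⟩ ⟨s, by ring⟩
          rw [hg] at h2; omega
        · exact hyo
      obtain ⟨k, hk⟩ := odd_sq (hyo.pow (n := 2))
      have hy4 : y ^ 4 = 8 * k + 1 := by rw [← hk]; ring
      obtain ⟨t, rfl⟩ := hxe
      have hx4 : (t + t) ^ 4 = 16 * t ^ 4 := by ring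
      rcases Nat.even_or_odd z with hze | hzo
      · obtain ⟨v, rfl⟩ := hze
        have hz2 : (v + v) ^ 2 = 4 * v ^ 2 := by ring
        rw [hx4, hy4, hz2] at h
        omega
      · obtain ⟨m, hm⟩ := odd_sq hzo
        rw [hx4, hy4, hm] at h
        omega
    · exact hxo
  have hy2x : y ^ 2 < x ^ 2 := Nat.pow_lt_pow_left hyx two_ne_zero
  have hx2odd : Odd (x ^ 2) := hxodd.pow
  obtain ⟨i, hi⟩ := id hx2odd
  rcases Nat.even_or_odd y with hye | hyo
  · -- Case B : y even, x odd
    obtain ⟨y₁, hy₁⟩ := hye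
    have hy₁0 : y₁ ≠ 0 := by omega
    have hy2even : y ^ 2 = 2 * (2 * y₁ ^ 2) := by rw [hy₁]; ring
    have hzodd : Odd z := by
      rcases Nat.even_or_odd z with hze | hzo
      · exfalso
        obtain ⟨v, hv⟩ := hze
        obtain ⟨k, hk⟩ := odd_sq hx2odd
        have hx4 : x ^ 4 = 8 * k + 1 := by rw [show x ^ 4 = (x ^ 2) ^ 2 from by ring, hk]
        have hy4 : y ^ 4 = 16 * y₁ ^ 4 := by rw [hy₁]; ring
        have hz2 : z ^ 2 = 4 * v ^ 2 := by rw [hv]; ring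
        rw [hx4, hy4, hz2] at h
        omega
      · exact hzo
    obtain ⟨q', hq'⟩ : ∃ q', x ^ 2 = y ^ 2 + q' := ⟨x ^ 2 - y ^ 2, by omega⟩
    set p' := x ^ 2 + y ^ 2 with hp'
    have hzpq : z ^ 2 = q' * p' := by
      have e1 : (y ^ 2 + q') ^ 2 = y ^ 4 + 2 * (y ^ 2 * q') + q' ^ 2 := by ring
      have e2 : x ^ 4 = (x ^ 2) ^ 2 := by ring
      have e3 : (x ^ 2) ^ 2 = (y ^ 2 + q') ^ 2 := by rw [hq']
      have e4 : q' * p' = q' * (y ^ 2 + q') + y ^ 2 * q' := by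
        rw [hp', hq']; ring
      have e5 : q' * (y ^ 2 + q') = y ^ 2 * q' + q' ^ 2 := by ring
      omega
    have hcqp : Nat.Coprime q' p' := by
      have hgd1 : Nat.gcd q' p' ∣ 2 * x ^ 2 := by
        have : q' + p' = 2 * x ^ 2 := by omega
        rw [← this]
        exact dvd_add (Nat.gcd_dvd_left q' p') (Nat.gcd_dvd_right q' p')
      have hgd2 : Nat.gcd q' p' ∣ 2 * y ^ 2 := by
        have hdiff : 2 * y ^ 2 = p' - q' := by omega
        rw [hdiff]
        exact Nat.dvd_sub (Nat.gcd_dvd_right q' p') (Nat.gcd_dvd_left q' p')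
      have hodd : Odd (Nat.gcd q' p') := by
        rcases Nat.even_or_odd (Nat.gcd q' p') with hev | hod
        · exfalso
          have h2q : (2 : ℕ) ∣ q' := hev.two_dvd.trans (Nat.gcd_dvd_left q' p')
          have h2z : (2 : ℕ) ∣ z ^ 2 := by
            obtain ⟨c, hc⟩ := h2q
            exact ⟨c * p', by rw [hzpq, hc]; ring⟩
          have := hzodd.pow (n := 2)
          omega
        · exact hod
      have hcop2 : Nat.Coprime (Nat.gcd q' p') 2 := Nat.coprime_two_right.mpr hodd
      have hd1 : Nat.gcd q' p' ∣ x ^ 2 := (Nat.Coprime.dvd_of_dvd_mul_left hcop2 hgd1)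
      have hd2 : Nat.gcd q' p' ∣ y ^ 2 := (Nat.Coprime.dvd_of_dvd_mul_left hcop2 hgd2)
      have : Nat.gcd q' p' ∣ Nat.gcd (x ^ 2) (y ^ 2) := Nat.dvd_gcd hd1 hd2
      have hcxy : Nat.gcd (x ^ 2) (y ^ 2) = 1 := Nat.Coprime.pow 2 2 hg
      rw [hcxy, Nat.dvd_one] at this
      exact this
    obtain ⟨Q, hQ⟩ := coprod_pow hcqp hzpq.symm
    obtain ⟨P, hP⟩ := coprod_pow hcqp.symm (by rw [mul_comm]; exact hzpq.symm)
    have hq'odd : Odd q' := by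
      rcases Nat.even_or_odd q' with hev | hod
      · exfalso; obtain ⟨c, hc⟩ := hev; omega
      · exact hod
    have hp'odd : Odd p' := by
      rcases Nat.even_or_odd p' with hev | hod
      · exfalso; obtain ⟨c2, hc2⟩ := hev
        have hpp : p' = x ^ 2 + y ^ 2 := hp'
        omega
      · exact hod
    have hPodd : Odd P := by
      rcases Nat.even_or_odd P with hev | hod
      · exfalso
        obtain ⟨c, hc⟩ := hev
        obtain ⟨c', hc'⟩ := hp'odd
        have : p' = (c + c) ^ 2 := by rw [hP, hc]
        have e : (c + c) ^ 2 = 4 * c ^ 2 := by ring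
        omega
      · exact hod
    have hQodd : Odd Q := by
      rcases Nat.even_or_odd Q with hev | hod
      · exfalso
        obtain ⟨c, hc⟩ := hev
        obtain ⟨c', hc'⟩ := hq'odd
        have : q' = (c + c) ^ 2 := by rw [hQ, hc]
        have e : (c + c) ^ 2 = 4 * c ^ 2 := by ring
        omega
      · exact hod
    have hQP : Q < P := by
      have hqp : q' < p' := by
        have : 0 < y ^ 2 := by positivity
        omega
      by_contra hc
      push_neg at hc
      have : P ^ 2 ≤ Q ^ 2 := Nat.pow_le_pow_left hc 2
      omega
    obtain ⟨ii, hii⟩ := id hPodd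
    obtain ⟨jj, hjj⟩ := id hQodd
    have hjlei : jj < ii := by omega
    set s := ii - jj with hs
    set r := ii + jj + 1 with hr
    have hPrs : P = r + s := by omega
    have hQrs : Q + s = r := by omega
    have hs0 : s ≠ 0 := by omega
    -- r * s = 2 * y₁ ^ 2
    have e1 : P ^ 2 = r ^ 2 + 2 * (r * s) + s ^ 2 := by rw [hPrs]; ring
    have e2 : r ^ 2 = Q ^ 2 + 2 * (Q * s) + s ^ 2 := by rw [← hQrs]; ring
    have e4 : Q * s + s ^ 2 = r * s := by rw [← hQrs]; ring
    have hPQ : P ^ 2 = Q ^ 2 + 2 * y ^ 2 := by omega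
    have hrs : r * s = 2 * y₁ ^ 2 := by omega
    have hrsx : r ^ 2 + s ^ 2 = x ^ 2 := by omega
    have hcrs : Nat.Coprime r s := by
      have hdp : Nat.gcd r s ∣ P := hPrs ▸ dvd_add (Nat.gcd_dvd_left r s) (Nat.gcd_dvd_right r s)
      have hdq : Nat.gcd r s ∣ Q := by
        have : Q = r - s := by omega
        rw [this]
        exact Nat.dvd_sub (Nat.gcd_dvd_left r s) (Nat.gcd_dvd_right r s)
      have hdp' : Nat.gcd r s ∣ p' := hP ▸ dvd_pow hdp two_ne_zero
      have hdq' : Nat.gcd r s ∣ q' := hQ ▸ dvd_pow hdq two_ne_zero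
      have : Nat.gcd r s ∣ Nat.gcd q' p' := Nat.dvd_gcd hdq' hdp'
      rw [hcqp, Nat.dvd_one] at this
      exact this
    -- get a b with x² = a⁴ + 4b⁴, y₁² = a²b², a² odd
    obtain ⟨a, b, hab, hy₁ab, haodd⟩ :
        ∃ a b, x ^ 2 = a ^ 4 + 4 * b ^ 4 ∧ y₁ ^ 2 = a ^ 2 * b ^ 2 ∧ Odd (a ^ 2) := by
      have hrsodd : Odd (r + s) := hPrs ▸ hPodd
      rcases Nat.even_or_odd r with hre | hro
      · obtain ⟨r₁, hr₁⟩ := hre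
        have hsodd : Odd s := by
          rcases Nat.even_or_odd s with hse | hso
          · exfalso; obtain ⟨c, hc⟩ := hse; obtain ⟨c', hc'⟩ := hrsodd; omega
          · exact hso
        have hr₁s : r₁ * s = y₁ ^ 2 := by
          have : (r₁ + r₁) * s = 2 * (r₁ * s) := by ring
          have hrr : r * s = (r₁ + r₁) * s := by rw [hr₁]
          omega
        have hc₁ : Nat.Coprime r₁ s :=
          Nat.Coprime.coprime_dvd_left ⟨2, by omega⟩ hcrs
        obtain ⟨b, hb⟩ := coprod_pow hc₁ hr₁s
        obtain ⟨a, ha⟩ := coprod_pow hc₁.symm (by rw [mul_comm]; exact hr₁s)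
        refine ⟨a, b, ?_, ?_, ?_⟩
        · have er : r ^ 2 = 4 * b ^ 4 := by rw [hr₁, hb]; ring
          have es : s ^ 2 = a ^ 4 := by rw [ha]; ring
          omega
        · rw [← hr₁s, ha, hb]; ring
        · rwa [← ha]
      · have hseven : Even s := by
          rcases Nat.even_or_odd s with hse | hso
          · exact hse
          · exfalso; obtain ⟨c, hc⟩ := hso; obtain ⟨c', hc'⟩ := hrsodd
            obtain ⟨c'', hc''⟩ := hro; omega
        obtain ⟨s₁, hs₁⟩ := hseven
        have hs₁r : s₁ * r = y₁ ^ 2 := by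
          have : (s₁ + s₁) * r = 2 * (s₁ * r) := by ring
          have hrr : r * s = (s₁ + s₁) * r := by rw [hs₁]; ring
          omega
        have hc₁ : Nat.Coprime s₁ r :=
          Nat.Coprime.coprime_dvd_left ⟨2, by omega⟩ hcrs.symm
        obtain ⟨b, hb⟩ := coprod_pow hc₁ hs₁r
        obtain ⟨a, ha⟩ := coprod_pow hc₁.symm (by rw [mul_comm]; exact hs₁r)
        refine ⟨a, b, ?_, ?_, ?_⟩
        · have es : s ^ 2 = 4 * b ^ 4 := by rw [hs₁, hb]; ring
          have er : r ^ 2 = a ^ 4 := by rw [ha]; ring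
          omega
        · rw [← hs₁r, ha, hb]; ring
        · rwa [← ha]
    have hb0 : b ≠ 0 := by
      rintro rfl
      simp at hy₁ab
      exact hy₁0 hy₁ab
    have ha0 : a ≠ 0 := by
      rintro rfl
      simp at haodd
    have hb4 : 1 ≤ b ^ 4 := Nat.one_le_iff_ne_zero.mpr (pow_ne_zero _ hb0)
    have hax : a ^ 2 < x := by
      by_contra hc
      push_neg at hc
      have : x ^ 2 ≤ (a ^ 2) ^ 2 := Nat.pow_le_pow_left hc 2
      have e : (a ^ 2) ^ 2 = a ^ 4 := by ring
      omega
    obtain ⟨N, hN, hN0⟩ : ∃ N, x = a ^ 2 + 2 * N ∧ 0 < N := by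
      obtain ⟨i', hi'⟩ := hxodd
      obtain ⟨j', hj'⟩ := haodd
      exact ⟨i' - j', by omega, by omega⟩
    set M := a ^ 2 + N with hM
    have hMN : M * N = b ^ 4 := by
      have e : x ^ 2 = a ^ 4 + 4 * (a ^ 2 * N) + 4 * N ^ 2 := by rw [hN]; ring
      have e' : M * N = a ^ 2 * N + N ^ 2 := by rw [hM]; ring
      omega
    have hya : y₁ = a * b := by
      have : y₁ ^ 2 = (a * b) ^ 2 := by rw [hy₁ab]; ring
      exact Nat.pow_left_injective (by norm_num) this
    have hcxa : Nat.Coprime x a := by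
      apply Nat.Coprime.coprime_dvd_right _ hg
      exact ⟨2 * b, by rw [hy₁, hya]; ring⟩
    have hcMN : Nat.Coprime M N := by
      have hdx : Nat.gcd M N ∣ x := by
        have : x = M + N := by omega
        rw [this]
        exact dvd_add (Nat.gcd_dvd_left M N) (Nat.gcd_dvd_right M N)
      have hda : Nat.gcd M N ∣ a ^ 2 := by
        have : a ^ 2 = M - N := by omega
        rw [this]
        exact Nat.dvd_sub (Nat.gcd_dvd_left M N) (Nat.gcd_dvd_right M N)
      have : Nat.gcd M N ∣ Nat.gcd x (a ^ 2) := Nat.dvd_gcd hdx hda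
      rw [Nat.Coprime.pow_right 2 hcxa, Nat.dvd_one] at this
      exact this
    obtain ⟨c, hc⟩ := coprod_pow hcMN hMN
    obtain ⟨d₀, hd₀⟩ := coprod_pow hcMN.symm (by rw [mul_comm]; exact hMN)
    have final : c ^ 4 = d₀ ^ 4 + a ^ 2 := by omega
    have hd₀0 : d₀ ≠ 0 := by rintro rfl; simp at hd₀; omega
    have hclt : c < x := by
      have h1 : c ≤ c ^ 4 := Nat.le_self_pow (by norm_num) c
      omega
    exact absurd final (IH c hclt d₀ a hd₀0 ha0)
  · -- Case A : y odd, x odd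
    have hy2odd : Odd (y ^ 2) := hyo.pow
    obtain ⟨j, hj⟩ := hy2odd
    obtain ⟨q, hq⟩ : ∃ q, x ^ 2 = y ^ 2 + 2 * q := ⟨i - j, by omega⟩
    set p := y ^ 2 + q with hp
    have hkey : z ^ 2 = 4 * (q * p) := by
      have e2 : x ^ 4 = (x ^ 2) ^ 2 := by ring
      have e3 : (x ^ 2) ^ 2 = (y ^ 2 + 2 * q) ^ 2 := by rw [hq]
      have e1 : (y ^ 2 + 2 * q) ^ 2 = y ^ 4 + 4 * (y ^ 2 * q) + 4 * q ^ 2 := by ring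
      have e4 : q * p = y ^ 2 * q + q ^ 2 := by rw [hp]; ring
      omega
    have hzeven : 2 ∣ z := by
      have h2 : (2 : ℕ) ∣ z ^ 2 := ⟨2 * (q * p), by omega⟩
      exact Nat.Prime.dvd_of_dvd_pow Nat.prime_two h2
    obtain ⟨w, rfl⟩ := hzeven
    have hw : q * p = w ^ 2 := by
      have e : (2 * w) ^ 2 = 4 * w ^ 2 := by ring
      omega
    have hcqp : Nat.Coprime q p := by
      have hd1 : Nat.gcd q p ∣ x ^ 2 := by
        have hx2 : x ^ 2 = p + q := by omega
        rw [hx2]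
        exact dvd_add (Nat.gcd_dvd_right q p) (Nat.gcd_dvd_left q p)
      have hd2 : Nat.gcd q p ∣ y ^ 2 := by
        have hy2 : y ^ 2 = p - q := by omega
        rw [hy2]
        exact Nat.dvd_sub (Nat.gcd_dvd_right q p) (Nat.gcd_dvd_left q p)
      have hthis : Nat.gcd q p ∣ Nat.gcd (x ^ 2) (y ^ 2) := Nat.dvd_gcd hd1 hd2
      have hcxy : Nat.gcd (x ^ 2) (y ^ 2) = 1 := Nat.Coprime.pow 2 2 hg
      rw [hcxy, Nat.dvd_one] at hthis
      exact hthis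
    obtain ⟨v, hv⟩ := coprod_pow hcqp hw
    obtain ⟨u, hu⟩ := coprod_pow hcqp.symm (by rw [mul_comm]; exact hw)
    have hv0 : v ≠ 0 := by
      rintro rfl
      simp at hv
      omega
    have hv1 : 1 ≤ v ^ 2 := Nat.one_le_iff_ne_zero.mpr (pow_ne_zero _ hv0)
    have hA : u ^ 2 = v ^ 2 + y ^ 2 := by omega
    have hB : u ^ 2 + v ^ 2 = x ^ 2 := by omega
    have hnew : u ^ 4 = v ^ 4 + (x * y) ^ 2 := by
      have e1 : u ^ 4 = (u ^ 2) ^ 2 := by ring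
      have e2 : (v ^ 2 + y ^ 2) ^ 2 = v ^ 4 + 2 * (v ^ 2 * y ^ 2) + (y ^ 2) ^ 2 := by ring
      have e3 : (u ^ 2) ^ 2 = (v ^ 2 + y ^ 2) ^ 2 := by rw [hA]
      have e4 : (x * y) ^ 2 = x ^ 2 * y ^ 2 := by ring
      have e5 : (u ^ 2 + v ^ 2) * y ^ 2 = u ^ 2 * y ^ 2 + v ^ 2 * y ^ 2 := by ring
      have e6 : x ^ 2 * y ^ 2 = (u ^ 2 + v ^ 2) * y ^ 2 := by rw [hB]
      have e7 : u ^ 2 * y ^ 2 = v ^ 2 * y ^ 2 + (y ^ 2) ^ 2 := by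
        rw [hA]; ring
      omega
    have hxy0 : x * y ≠ 0 := Nat.mul_ne_zero hx0 hy
    have hult : u < x := by
      by_contra hc
      push_neg at hc
      have : x ^ 2 ≤ u ^ 2 := Nat.pow_le_pow_left hc 2
      omega
    exact absurd hnew (IH u hult v (x * y) hv0 hxy0)

theorem stmt_18 (x y : ℕ) (hx : 0 < x) (hy : 0 < y)
    (h : x * (x + 1) = 2 * y ^ 4) : x = 1 := by
  rcases Nat.even_or_odd x with hxe | hxo
  · exfalso
    obtain ⟨k, rfl⟩ := hxe
    have hk0 : k ≠ 0 := by omega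
    have hcop : Nat.Coprime k (k + k + 1) := by
      have h1 := (Nat.coprime_add_mul_right_right k 1 2).mpr (Nat.coprime_one_right k)
      have e : k + k + 1 = 1 + 2 * k := by ring
      rw [Nat.Coprime, e]
      exact h1
    have heq : k * (k + k + 1) = y ^ 4 := by
      have e : (k + k) * (k + k + 1) = 2 * (k * (k + k + 1)) := by ring
      omega
    obtain ⟨a, ha⟩ := coprod_pow hcop heq
    obtain ⟨b, hb⟩ := coprod_pow hcop.symm (by rw [mul_comm]; exact heq)
    have hb4 : b ^ 4 = 2 * a ^ 4 + 1 := by omega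
    have ha0 : a ≠ 0 := by rintro rfl; simp at ha; exact hk0 ha
    have hb0 : b ≠ 0 := by rintro rfl; simp at hb4
    refine not_fermat_42 (a := (a : ℤ) ^ 2) (b := (b : ℤ)) (c := (a : ℤ) ^ 4 + 1)
      (by positivity) (by exact_mod_cast Nat.cast_ne_zero.mpr hb0) ?_
    have hb4' : (b : ℤ) ^ 4 = 2 * (a : ℤ) ^ 4 + 1 := by exact_mod_cast hb4
    linear_combination hb4'
  · obtain ⟨m, hm⟩ := hxo
    obtain ⟨k, hk⟩ : ∃ k, x + 1 = 2 * k := ⟨m + 1, by omega⟩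
    have hk0 : k ≠ 0 := by omega
    have hcop : Nat.Coprime x k := by
      have hd1 : Nat.gcd x k ∣ x + 1 := by
        rw [hk]
        exact Dvd.dvd.mul_left (Nat.gcd_dvd_right x k) 2
      have hd2 : Nat.gcd x k ∣ 1 := by
        have := Nat.dvd_sub hd1 (Nat.gcd_dvd_left x k)
        simpa using this
      simpa [Nat.dvd_one] using hd2
    have heq : x * k = y ^ 4 := by
      rw [hk] at h
      have e : x * (2 * k) = 2 * (x * k) := by ring
      omega
    obtain ⟨a, ha⟩ := coprod_pow hcop heq
    obtain ⟨b, hb⟩ := coprod_pow hcop.symm (by rw [mul_comm]; exact heq)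
    have key : a ^ 4 + 1 = 2 * b ^ 4 := by omega
    rcases Nat.lt_or_ge b 2 with hb2 | hb2
    · interval_cases b <;> omega
    · exfalso
      have hbig : 16 ≤ b ^ 4 := by
        calc (16 : ℕ) = 2 ^ 4 := by norm_num
        _ ≤ b ^ 4 := Nat.pow_le_pow_left hb2 4
      obtain ⟨t, ht, ht0⟩ : ∃ t, b ^ 4 = t + 1 ∧ t ≠ 0 := ⟨b ^ 4 - 1, by omega, by omega⟩
      have ha0 : a ≠ 0 := by rintro rfl; simp at ha; omega
      apply flt4sub (b ^ 2) a t ha0 ht0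
      have e3 : (b ^ 2) ^ 4 = (t + 1) ^ 2 := by
        rw [show (b ^ 2) ^ 4 = (b ^ 4) ^ 2 from by ring, ht]
      have e4 : (t + 1) ^ 2 = t ^ 2 + 2 * t + 1 := by ring
      omega
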